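/- Let Q be the quiver with one vertex and r ≥ 2 loops, d ∈ ℕ, L < d, and let S = (S_0, …, S_{L−1}) be a sequence of nonnegative integers summing to d with all S_l > 0 for l < the Loewy length of S. If dim S_l ≤ r · dim S_{l−1} and dim S_{l−1} ≤ r · dim S_l for all 1 ≤ l ≤ L−1 with S_l ≠ 0, then S is realizable as the radical layering of some d-dimensional Λ_L-module, i.e., there exists an r-tuple of d×d matrices (X_1, …, X_r) with all length-L products zero, whose generated nilpotent ideal filtration has layer dimensions (S_0, …, S_{L−1}). -/

import Mathlib

/-- The radical filtration `J^l M` of the `d`-dimensional module `M = K^d` over the local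
truncated path algebra determined by the matrices `X_1, …, X_r`:
`W 0 = M` and `W (l+1) = Σ_i X_i (W l)`. -/
def radW {K : Type} [Field K] {r d : ℕ} (X : Fin r → Matrix (Fin d) (Fin d) K) :
    ℕ → Submodule K (Fin d → K)
  | 0 => ⊤
  | l + 1 => ⨆ i : Fin r, (radW X l).map (X i).mulVecLin

namespace Real15

open Finset

/-- Partial sums. -/
def T (S : ℕ → ℕ) (l : ℕ) : ℕ := ∑ k ∈ Finset.range l, S k

lemma T_mono (S : ℕ → ℕ) : Monotone (T S) := fun _ _ h =>
  Finset.sum_le_sum_of_subset (Finset.range_subset_range.2 h)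

lemma T_succ (S : ℕ → ℕ) (l : ℕ) : T S (l + 1) = T S l + S l :=
  Finset.sum_range_succ _ _

/-- Layer of index `v`. -/
def lay (S : ℕ → ℕ) (m : ℕ) (v : ℕ) : ℕ := Nat.findGreatest (fun l => T S l ≤ v) m

lemma T_lay_le (S : ℕ → ℕ) (m v : ℕ) : T S (lay S m v) ≤ v :=
  Nat.findGreatest_spec (P := fun l => T S l ≤ v) (Nat.zero_le m) (by simp [T])

lemma lay_lt (S : ℕ → ℕ) {m v : ℕ} (h : v < T S m) : lay S m v < m := by
  have h1 : lay S m v ≤ m := Nat.findGreatest_le (P := fun l => T S l ≤ v) m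
  rcases h1.lt_or_eq with h' | h'
  · exact h'
  · have := T_lay_le S m v
    rw [h'] at this
    omega

lemma lt_T_lay_succ (S : ℕ → ℕ) {m v : ℕ} (h : v < T S m) : v < T S (lay S m v + 1) := by
  by_contra hc
  exact Nat.findGreatest_is_greatest (Nat.lt_succ_self _) (lay_lt S h) (le_of_not_gt hc)

lemma le_lay (S : ℕ → ℕ) {m v l : ℕ} (hl : l ≤ m) (h : T S l ≤ v) : l ≤ lay S m v :=
  Nat.le_findGreatest hl h

lemma lay_eq (S : ℕ → ℕ) {m v l : ℕ} (hv : v < T S m) (h1 : T S l ≤ v) (h2 : v < T S (l + 1)) :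
    lay S m v = l := by
  have ha := T_lay_le S m v
  have hb := lt_T_lay_succ S hv
  by_contra hne
  rcases Nat.lt_or_ge (lay S m v) l with h | h
  · have : T S (lay S m v + 1) ≤ T S l := T_mono S h
    omega
  · have h' : l + 1 ≤ lay S m v := lt_of_le_of_ne h (Ne.symm hne)
    have : T S (l + 1) ≤ T S (lay S m v) := T_mono S h'
    omega

/-- The coordinate subspace of vectors vanishing on indices `< t`. -/
def P (K : Type) [Field K] (d t : ℕ) : Submodule K (Fin d → K) where
  carrier := {x | ∀ v : Fin d, (v : ℕ) < t → x v = 0}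
  add_mem' := fun hx hy v hv => by simp [hx v hv, hy v hv]
  zero_mem' := fun v hv => rfl
  smul_mem' := fun c x hx v hv => by simp [hx v hv]

lemma mem_P {K : Type} [Field K] {d t : ℕ} {x : Fin d → K} :
    x ∈ P K d t ↔ ∀ v : Fin d, (v : ℕ) < t → x v = 0 := Iff.rfl

lemma P_zero (K : Type) [Field K] (d : ℕ) : P K d 0 = ⊤ := by
  ext x; simp [mem_P]

lemma P_bot (K : Type) [Field K] {d t : ℕ} (h : d ≤ t) : P K d t = ⊥ := by
  ext x
  simp only [mem_P, Submodule.mem_bot]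
  constructor
  · intro hx; funext v; exact hx v (lt_of_lt_of_le v.2 h)
  · rintro rfl v _; rfl

lemma finrank_P (K : Type) [Field K] (d t : ℕ) (ht : t ≤ d) :
    Module.finrank K (P K d t) = d - t := by
  classical
  let π : (Fin d → K) →ₗ[K] ({v : Fin d // (v : ℕ) < t} → K) :=
    LinearMap.pi fun v => LinearMap.proj v.1
  have hker : LinearMap.ker π = P K d t := by
    ext x
    simp only [LinearMap.mem_ker, mem_P]
    constructor
    · intro h v hv; exact congrFun h ⟨v, hv⟩
    · intro h; funext v; exact h v.1 v.2
  have hsurj : LinearMap.range π = ⊤ := by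
    rw [LinearMap.range_eq_top]
    intro y
    refine ⟨fun v => if h : (v : ℕ) < t then y ⟨v, h⟩ else 0, ?_⟩
    funext v
    simp [π, LinearMap.pi_apply, v.2]
  have hcard : Fintype.card {v : Fin d // (v : ℕ) < t} = t := by
    have e : {v : Fin d // (v : ℕ) < t} ≃ Fin t :=
      { toFun := fun v => ⟨v.1, v.2⟩
        invFun := fun j => ⟨⟨j.1, lt_of_lt_of_le j.2 ht⟩, j.2⟩
        left_inv := fun v => by ext; rfl
        right_inv := fun j => rfl }
    rw [Fintype.card_congr e, Fintype.card_fin]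
  have := LinearMap.finrank_range_add_finrank_ker π
  rw [hker, hsurj, finrank_top, Module.finrank_pi, Module.finrank_pi, Fintype.card_fin,
    hcard] at this
  omega

variable {K : Type} [Field K]

/-- The matrices. -/
def Xmat (K : Type) [Field K] (S : ℕ → ℕ) (m r d : ℕ) (i : Fin r) :
    Matrix (Fin d) (Fin d) K :=
  Matrix.of fun w v =>
    if (w : ℕ) = T S (lay S m (v : ℕ) + 1) + ((i : ℕ) * S (lay S m (v : ℕ)) + ((v : ℕ) - T S (lay S m (v : ℕ))))
       ∧ (i : ℕ) * S (lay S m (v : ℕ)) + ((v : ℕ) - T S (lay S m (v : ℕ))) < S (lay S m (v : ℕ) + 1)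
    then 1 else 0

lemma map_P_le (S : ℕ → ℕ) (m r d : ℕ) (hTm : T S m = d) (i : Fin r) (l : ℕ) :
    (P K d (T S l)).map (Xmat K S m r d i).mulVecLin ≤ P K d (T S (l + 1)) := by
  rintro _ ⟨y, hy, rfl⟩
  intro w hw
  rw [Matrix.mulVecLin_apply, Matrix.mulVec]
  simp only [dotProduct]
  apply Finset.sum_eq_zero
  intro v _
  rcases le_or_gt m l with hml | hlm
  · -- l ≥ m: y v = 0 always
    have : (v : ℕ) < T S l := lt_of_lt_of_le v.2 (hTm ▸ T_mono S hml)
    rw [hy v this, mul_zero]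
  · rcases lt_or_ge (v : ℕ) (T S l) with hv | hv
    · rw [hy v hv, mul_zero]
    · -- X i w v = 0
      have hlay : l + 1 ≤ lay S m (v : ℕ) + 1 :=
        Nat.succ_le_succ (le_lay S (le_of_lt hlm) hv)
      have : Xmat K S m r d i w v = 0 := by
        rw [Xmat, Matrix.of_apply, if_neg]
        rintro ⟨hweq, -⟩
        have : T S (l + 1) ≤ (w : ℕ) := by
          calc T S (l + 1) ≤ T S (lay S m (v : ℕ) + 1) := T_mono S hlay
          _ ≤ (w : ℕ) := by omega
        omega
      rw [this, zero_mul]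

lemma single_mem_sup (S : ℕ → ℕ) (m r d : ℕ) (hTm : T S m = d)
    (hpos : ∀ k, k < m → 0 < S k)
    (hcond : ∀ k, 1 ≤ k → k < m → S k ≤ r * S (k - 1))
    {l : ℕ} (hlm : l < m) (w : Fin d) (hw : T S (l + 1) ≤ (w : ℕ)) :
    Pi.single w (1 : K) ∈ ⨆ i : Fin r, (P K d (T S l)).map (Xmat K S m r d i).mulVecLin := by
  classical
  have hwd : (w : ℕ) < T S m := hTm ▸ w.2
  have hk1 : l + 1 ≤ lay S m (w : ℕ) := le_lay S (by omega) hw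
  have hkm : lay S m (w : ℕ) < m := lay_lt S hwd
  have hTkw : T S (lay S m (w : ℕ)) ≤ (w : ℕ) := T_lay_le S m (w : ℕ)
  have hwTk : (w : ℕ) < T S (lay S m (w : ℕ) + 1) := lt_T_lay_succ S hwd
  obtain ⟨a, hka⟩ : ∃ a, lay S m (w : ℕ) = a + 1 := ⟨lay S m (w : ℕ) - 1, by omega⟩
  rw [hka] at hk1 hkm hTkw hwTk
  set t := (w : ℕ) - T S (a + 1) with hT
  have htS : t < S (a + 1) := by have := T_succ S (a + 1); omega
  have hSa : 0 < S a := hpos a (by omega)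
  have hSle : S (a + 1) ≤ r * S a := by
    have := hcond (a + 1) (by omega) hkm
    simpa using this
  set i := t / S a with hi
  set j := t % S a with hj
  have hir : i < r := by
    rw [hi, Nat.div_lt_iff_lt_mul hSa]
    calc t < S (a + 1) := htS
    _ ≤ r * S a := hSle
  have hjS : j < S a := Nat.mod_lt _ hSa
  have hvd : T S a + j < d := by
    have h1 : T S a + j < T S (a + 1) := by have := T_succ S a; omega
    have h2 : T S (a + 1) ≤ T S m := T_mono S (by omega)
    omega
  set v : Fin d := ⟨T S a + j, hvd⟩ with hv
  have hlayv : lay S m (v : ℕ) = a := by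
    apply lay_eq S (hTm ▸ v.2)
    · simp [hv]
    · simp only [hv]; have := T_succ S a; omega
  have hij : i * S a + j = t := by
    rw [hi, hj, mul_comm]
    exact Nat.div_add_mod t (S a)
  refine le_iSup (fun i : Fin r => (P K d (T S l)).map (Xmat K S m r d i).mulVecLin)
    ⟨i, hir⟩ ?_
  refine ⟨Pi.single v 1, ?_, ?_⟩
  · intro u hu
    have : u ≠ v := by
      intro h
      have : T S l ≤ T S a := T_mono S (by omega)
      have : (u : ℕ) = T S a + j := by rw [h]
      omega
    exact Pi.single_eq_of_ne this 1
  · rw [Matrix.mulVecLin_apply, Matrix.mulVec_single_one]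
    funext w'
    have hcol : Xmat K S m r d ⟨i, hir⟩ w' v = if w' = w then 1 else 0 := by
      rw [Xmat, Matrix.of_apply]
      have hsub : (v : ℕ) - T S a = j := by simp [hv]
      rw [hlayv, hsub, hij]
      have hwt : T S (a + 1) + t = (w : ℕ) := by omega
      by_cases h : w' = w
      · rw [if_pos, if_pos h]
        exact ⟨by rw [h, hwt], htS⟩
      · rw [if_neg, if_neg h]
        rintro ⟨h1, -⟩
        exact h (Fin.ext (by omega))
    rw [Matrix.col_apply, hcol]
    rw [Pi.single_apply]

theorem radW_eq (S : ℕ → ℕ) (m r d : ℕ) (hTm : T S m = d)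
    (hpos : ∀ k, k < m → 0 < S k)
    (hcond : ∀ k, 1 ≤ k → k < m → S k ≤ r * S (k - 1)) (l : ℕ) :
    radW (Xmat K S m r d) l = P K d (T S l) := by
  induction l with
  | zero => rw [radW]; rw [show T S 0 = 0 from rfl, P_zero]
  | succ l ih =>
    rw [radW, ih]
    apply le_antisymm
    · exact iSup_le fun i => map_P_le S m r d hTm i l
    · rcases lt_or_ge l m with hlm | hml
      · intro x hx
        rw [pi_eq_sum_univ x]
        apply Submodule.sum_mem
        intro w _
        rcases lt_or_ge (w : ℕ) (T S (l + 1)) with hw | hw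
        · rw [hx w hw]
          simp
        · apply Submodule.smul_mem
          have hmem := single_mem_sup (K := K) S m r d hTm hpos hcond hlm w hw
          have heq : (fun j => if w = j then (1 : K) else 0) = Pi.single w 1 := by
            funext j
            rw [Pi.single_apply]
            by_cases h : j = w
            · simp [h]
            · simp [h, Ne.symm h]
          rw [heq]
          exact hmem
      · have : P K d (T S (l + 1)) = ⊥ :=
          P_bot K (hTm ▸ T_mono S (by omega))
        rw [this]
        exact bot_le

lemma prod_map_le (S : ℕ → ℕ) (m r d : ℕ) (hTm : T S m = d) :
    ∀ (n : ℕ) (w : Fin n → Fin r) (l : ℕ),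
      (P K d (T S l)).map ((List.ofFn fun j => Xmat K S m r d (w j)).prod).mulVecLin
        ≤ P K d (T S (l + n)) := by
  intro n
  induction n with
  | zero =>
    intro w l
    simp [Matrix.mulVecLin_one, Submodule.map_id]
  | succ n ih =>
    intro w l
    rw [List.ofFn_succ, List.prod_cons, Matrix.mulVecLin_mul, Submodule.map_comp]
    calc Submodule.map (Xmat K S m r d (w 0)).mulVecLin
          (Submodule.map ((List.ofFn fun j => Xmat K S m r d (w j.succ)).prod).mulVecLin
            (P K d (T S l)))
        ≤ Submodule.map (Xmat K S m r d (w 0)).mulVecLin (P K d (T S (l + n))) :=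
          Submodule.map_mono (ih _ l)
      _ ≤ P K d (T S (l + n + 1)) := map_P_le S m r d hTm (w 0) (l + n)
      _ = P K d (T S (l + (n + 1))) := by rw [Nat.add_assoc]

end Real15

/-- Let `Q` be the quiver with one vertex and `r ≥ 2` loops, `L < d`, and
let `S = (S_0, …, S_{L-1})` be a sequence of nonnegative integers summing to `d` whose nonzero
entries form an initial segment. If `S_l ≤ r·S_{l-1}` and `S_{l-1} ≤ r·S_l` for all
`1 ≤ l ≤ L-1` with `S_l ≠ 0`, then `S` is realizable as the radical layering of a
`d`-dimensional `Λ_L`-module: there are `d×d` matrices `X_1, …, X_r` over `K` with all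
products of `L` of them zero, whose radical filtration has layer dimensions `(S_0, …, S_{L-1})`. -/
theorem realizable_radical_layering_local
    (K : Type) [Field K] [IsAlgClosed K] (r d L : ℕ) (hr : 2 ≤ r) (hL : L < d)
    (S : ℕ → ℕ) (hsupp : ∀ l, L ≤ l → S l = 0) (hsum : (∑ l ∈ Finset.range L, S l) = d)
    (hseg : ∃ m : ℕ, m ≤ L ∧ (∀ l, l < m → 0 < S l) ∧ ∀ l, m ≤ l → S l = 0)
    (hcond : ∀ l, 1 ≤ l → l ≤ L - 1 → S l ≠ 0 →
      S l ≤ r * S (l - 1) ∧ S (l - 1) ≤ r * S l) :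
    ∃ X : Fin r → Matrix (Fin d) (Fin d) K,
      (∀ w : Fin L → Fin r, (List.ofFn fun j => X (w j)).prod = 0) ∧
      ∀ l, l < L →
        Module.finrank K (radW X l) - Module.finrank K (radW X (l + 1)) = S l := by
  obtain ⟨m, hmL, hpos, hzero⟩ := hseg
  have hTL : Real15.T S L = d := hsum
  have hTm : Real15.T S m = d := by
    rw [← hTL]
    exact Finset.sum_subset (Finset.range_subset_range.2 hmL)
      (fun x _ hnx => hzero x (le_of_not_gt (fun h => hnx (Finset.mem_range.2 h))))
  have hcond' : ∀ k, 1 ≤ k → k < m → S k ≤ r * S (k - 1) := by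
    intro k h1 h2
    exact (hcond k h1 (by omega) (hpos k h2).ne').1
  refine ⟨Real15.Xmat K S m r d, ?_, ?_⟩
  · intro w
    have hmap := Real15.prod_map_le (K := K) S m r d hTm L w 0
    rw [show Real15.T S 0 = 0 from rfl, zero_add, Real15.P_zero, Real15.P_bot K hTL.ge, Submodule.map_top] at hmap
    have h0 : ((List.ofFn fun j => Real15.Xmat K S m r d (w j)).prod).mulVecLin = 0 :=
      LinearMap.range_eq_bot.mp (le_bot_iff.mp hmap)
    apply Matrix.ext
    intro a b
    have h2 : ((List.ofFn fun j => Real15.Xmat K S m r d (w j)).prod).mulVec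
        (Pi.single b 1) = 0 := by
      rw [← Matrix.mulVecLin_apply, h0]; rfl
    rw [Matrix.mulVec_single_one] at h2
    simpa using congrFun h2 a
  · intro l hl
    have h1 : Real15.T S l ≤ d := hTL ▸ Real15.T_mono S (by omega)
    have h2 : Real15.T S (l + 1) ≤ d := hTL ▸ Real15.T_mono S (by omega)
    rw [Real15.radW_eq S m r d hTm hpos hcond' l,
        Real15.radW_eq S m r d hTm hpos hcond' (l + 1),
        Real15.finrank_P K d _ h1, Real15.finrank_P K d _ h2]
    have := Real15.T_succ S l
    omega
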